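/- Local efficiency of the estimators: for each element K, η_{i,K} ≤ C ‖σ - σ_h‖_{H(div;K)} with C depending only on ‖β‖_∞, ‖γ‖_∞ (and d) but not on the mesh size, where η_{1,K}² = ‖∇·σ_h + γ̃(β·σ_h) - f‖²_{0,K} + Σᵢ‖σ_h·β⊥⁽ⁱ⁾‖²_{0,K} and η_{2,K} = ‖γσ_h + β(∇·σ_h - f)‖_{0,K}. -/

import Mathlib

open MeasureTheory Real RealInnerProductSpace ENNReal

private lemma key_bound {α W E' F' : Type*} [MeasurableSpace α] {μ : Measure α}
    [NormedAddCommGroup W] [NormedAddCommGroup E'] [NormedAddCommGroup F']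
    {B : ℝ≥0∞} (hB : B ≠ ⊤) {w : α → W} (hw : eLpNorm w ∞ μ ≤ B)
    {f : α → E'} {g : α → F'} (h : ∀ᵐ x ∂μ, ‖f x‖ ≤ ‖w x‖ * ‖g x‖) :
    eLpNorm f 2 μ ≤ B * eLpNorm g 2 μ := by
  have hwB : ∀ᵐ x ∂μ, ‖w x‖ ≤ B.toReal := by
    rw [eLpNorm_exponent_top] at hw
    filter_upwards [enorm_ae_le_eLpNormEssSup w μ] with x hx
    have h1 : (‖w x‖₊ : ℝ≥0∞) ≤ B := hx.trans hw
    have h2 := ENNReal.toReal_mono hB h1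
    simpa using h2
  have hfb : ∀ᵐ x ∂μ, ‖f x‖ ≤ ‖B.toReal • ‖g x‖‖ := by
    filter_upwards [h, hwB] with x h1 h2
    have hg : (0:ℝ) ≤ ‖g x‖ := norm_nonneg _
    have h3 : ‖f x‖ ≤ B.toReal * ‖g x‖ := by
      refine h1.trans ?_
      exact mul_le_mul_of_nonneg_right h2 hg
    have h4 : (0:ℝ) ≤ B.toReal * ‖g x‖ := mul_nonneg ENNReal.toReal_nonneg hg
    simpa [Real.norm_eq_abs, abs_of_nonneg h4, smul_eq_mul] using h3
  calc eLpNorm f 2 μ ≤ eLpNorm (fun x => B.toReal • ‖g x‖) 2 μ := eLpNorm_mono_ae hfb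
    _ = B * eLpNorm g 2 μ := by
        have h5 := eLpNorm_const_smul (B.toReal) (fun x => ‖g x‖) 2 μ
        have h6 : (fun x => B.toReal • ‖g x‖) = B.toReal • (fun x => ‖g x‖) := rfl
        rw [h6, h5, eLpNorm_norm]
        congr 1
        rw [Real.enorm_eq_ofReal ENNReal.toReal_nonneg, ENNReal.ofReal_toReal hB]

theorem stmt_16 (d : ℕ) (Bβ Bγ Bγβ : ℝ≥0∞)
    (hBβ : Bβ < ⊤) (hBγ : Bγ < ⊤) (hBγβ : Bγβ < ⊤) :
    ∃ C : ℝ≥0∞, 0 < C ∧ C < ⊤ ∧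
      ∀ (α : Type) (_ : MeasurableSpace α) (μ : Measure α)
        (β : α → EuclideanSpace ℝ (Fin d)) (γ f : α → ℝ)
        (βp : Fin (d - 1) → α → EuclideanSpace ℝ (Fin d))
        (σ σh : α → EuclideanSpace ℝ (Fin d)) (dσ dσh : α → ℝ),
        Measurable β → Measurable γ → (∀ i, Measurable (βp i)) →
        (∀ x, 0 < ‖β x‖) →
        (∀ i x, ⟪β x, βp i x⟫ = 0) →
        (∀ i j x, ⟪βp i x, βp j x⟫ = if i = j then 1 else 0) →
        AEStronglyMeasurable σ μ → AEStronglyMeasurable σh μ →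
        AEStronglyMeasurable dσ μ → AEStronglyMeasurable dσh μ →
        -- bounds defining the dependence of C on the data
        eLpNorm β ∞ μ ≤ Bβ → eLpNorm γ ∞ μ ≤ Bγ →
        eLpNorm (fun x => γ x / ‖β x‖) ∞ μ ≤ Bγβ →
        -- σ is the exact flux of the first-order system
        (∀ᵐ x ∂μ, dσ x + (γ x / ‖β x‖ ^ 2) * ⟪β x, σ x⟫ = f x) →
        (∀ i, ∀ᵐ x ∂μ, ⟪σ x, βp i x⟫ = 0) →
        (∀ᵐ x ∂μ, γ x • σ x + (dσ x - f x) • β x = 0) →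
        (eLpNorm (fun x => dσh x + (γ x / ‖β x‖ ^ 2) * ⟪β x, σh x⟫ - f x) 2 μ ^ 2
              + ∑ i, eLpNorm (fun x => ⟪σh x, βp i x⟫) 2 μ ^ 2) ^ (1 / 2 : ℝ) ≤
            C * (eLpNorm (fun x => σ x - σh x) 2 μ ^ 2
              + eLpNorm (fun x => dσ x - dσh x) 2 μ ^ 2) ^ (1 / 2 : ℝ) ∧
          eLpNorm (fun x => γ x • σh x + (dσh x - f x) • β x) 2 μ ≤
            C * (eLpNorm (fun x => σ x - σh x) 2 μ ^ 2
              + eLpNorm (fun x => dσ x - dσh x) 2 μ ^ 2) ^ (1 / 2 : ℝ) := by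
  refine ⟨3 * (Bβ + Bγ + Bγβ + (d : ℝ≥0∞) + 2), ?_, ?_, ?_⟩
  · refine ENNReal.mul_pos (by norm_num) ?_
    intro h
    simp [add_eq_zero] at h
  · finiteness
  intro α mα μ β γ f βp σ σh dσ dσh hβm hγm hβpm hβpos hβperp hβon hσ hσh hdσ hdσh
    hBβ' hBγ' hBγβ' hflux hperp hsys
  set M := Bβ + Bγ + Bγβ + (d : ℝ≥0∞) + 2 with hMdef
  set E := eLpNorm (fun x => σ x - σh x) 2 μ with hEdef
  set D := eLpNorm (fun x => dσ x - dσh x) 2 μ with hDdef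
  set R := E ^ 2 + D ^ 2 with hRdef
  set N := R ^ (1/2 : ℝ) with hNdef
  have hsq : ∀ a : ℝ≥0∞, (a ^ 2) ^ (1/2 : ℝ) = a := by
    intro a
    rw [← ENNReal.rpow_natCast a 2, ← ENNReal.rpow_mul]
    norm_num
  have hN2 : N ^ 2 = R := by
    rw [hNdef, ← ENNReal.rpow_natCast (R ^ (1/2:ℝ)) 2, ← ENNReal.rpow_mul]
    norm_num
  have h1M : (1 : ℝ≥0∞) ≤ M := by
    rw [hMdef]
    calc (1:ℝ≥0∞) ≤ 2 := by norm_num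
      _ ≤ Bβ + Bγ + Bγβ + (d : ℝ≥0∞) + 2 := le_add_self
  have hBβM : Bβ ≤ M := by rw [hMdef]; calc Bβ ≤ Bβ + (Bγ + Bγβ + (d:ℝ≥0∞) + 2) := le_self_add
                                            _ = _ := by ring
  have hBγM : Bγ ≤ M := by rw [hMdef]; calc Bγ ≤ Bγ + (Bβ + Bγβ + (d:ℝ≥0∞) + 2) := le_self_add
                                            _ = _ := by ring
  have hBγβM : Bγβ ≤ M := by rw [hMdef]; calc Bγβ ≤ Bγβ + (Bβ + Bγ + (d:ℝ≥0∞) + 2) := le_self_add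
                                            _ = _ := by ring
  have hdM : (d : ℝ≥0∞) ≤ M := by
    rw [hMdef]
    calc (d:ℝ≥0∞) ≤ (d:ℝ≥0∞) + (Bβ + Bγ + Bγβ + 2) := le_self_add
      _ = _ := by ring
  have hEN : E ≤ N := by
    rw [hNdef, ← hsq E]
    exact ENNReal.rpow_le_rpow le_self_add (by norm_num)
  have hDN : D ≤ N := by
    rw [hNdef, ← hsq D]
    exact ENNReal.rpow_le_rpow le_add_self (by norm_num)
  have he : AEStronglyMeasurable (fun x => σ x - σh x) μ := hσ.sub hσh
  have hde : AEStronglyMeasurable (fun x => dσ x - dσh x) μ := hdσ.sub hdσh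
  have hβpnorm : ∀ i x, ‖βp i x‖ = 1 := by
    intro i x
    have h := hβon i i x
    simp only [if_pos rfl] at h
    have h2 : ‖βp i x‖ ^ 2 = 1 := by rw [← real_inner_self_eq_norm_sq]; exact h
    nlinarith [norm_nonneg (βp i x)]
  -- first estimator, first piece
  have hA1 : eLpNorm (fun x => dσh x + (γ x / ‖β x‖ ^ 2) * ⟪β x, σh x⟫ - f x) 2 μ
      ≤ D + Bγβ * E := by
    have hcongr : eLpNorm (fun x => dσh x + (γ x / ‖β x‖ ^ 2) * ⟪β x, σh x⟫ - f x) 2 μ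
        = eLpNorm (fun x => (dσ x - dσh x) + (γ x / ‖β x‖ ^ 2) * ⟪β x, σ x - σh x⟫) 2 μ := by
      rw [← eLpNorm_neg (fun x => (dσ x - dσh x) + (γ x / ‖β x‖ ^ 2) * ⟪β x, σ x - σh x⟫)]
      apply eLpNorm_congr_ae
      filter_upwards [hflux] with x hx
      simp only [Pi.neg_apply]
      rw [inner_sub_right]
      nlinarith [hx]
    rw [hcongr]
    have hm2 : AEStronglyMeasurable (fun x => (γ x / ‖β x‖ ^ 2) * ⟪β x, σ x - σh x⟫) μ := by
      exact ((hγm.div ((hβm.norm).pow measurable_const)).aestronglyMeasurable).mul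
        ((hβm.aestronglyMeasurable).inner he)
    calc _ ≤ D + eLpNorm (fun x => (γ x / ‖β x‖ ^ 2) * ⟪β x, σ x - σh x⟫) 2 μ :=
        eLpNorm_add_le hde hm2 one_le_two
      _ ≤ D + Bγβ * E := by
        refine add_le_add_right ?_ D
        refine key_bound hBγβ.ne hBγβ' ?_
        refine Filter.Eventually.of_forall fun x => ?_
        have hb := hβpos x
        have hinner := abs_real_inner_le_norm (β x) (σ x - σh x)
        rw [Real.norm_eq_abs, Real.norm_eq_abs, abs_mul]
        calc |γ x / ‖β x‖ ^ 2| * |⟪β x, σ x - σh x⟫|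
            ≤ |γ x| / ‖β x‖ ^ 2 * (‖β x‖ * ‖σ x - σh x‖) := by
              rw [abs_div, abs_pow, abs_of_nonneg (norm_nonneg _)]
              exact mul_le_mul_of_nonneg_left hinner (by positivity)
          _ = |γ x / ‖β x‖| * ‖σ x - σh x‖ := by
              rw [abs_div, abs_of_nonneg (norm_nonneg (β x))]
              field_simp
  -- first estimator, perpendicular pieces
  have hSi : ∀ i, eLpNorm (fun x => ⟪σh x, βp i x⟫) 2 μ ≤ E := by
    intro i
    have hcongr : eLpNorm (fun x => ⟪σh x, βp i x⟫) 2 μ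
        = eLpNorm (fun x => ⟪σh x - σ x, βp i x⟫) 2 μ := by
      apply eLpNorm_congr_ae
      filter_upwards [hperp i] with x hx
      rw [inner_sub_left, hx, sub_zero]
    rw [hcongr]
    apply eLpNorm_mono_ae
    refine Filter.Eventually.of_forall fun x => ?_
    have h := abs_real_inner_le_norm (σh x - σ x) (βp i x)
    rw [hβpnorm i x, mul_one] at h
    rw [Real.norm_eq_abs]
    calc |⟪σh x - σ x, βp i x⟫| ≤ ‖σh x - σ x‖ := h
      _ = ‖σ x - σh x‖ := norm_sub_rev _ _
  -- second estimator
  have hA3 : eLpNorm (fun x => γ x • σh x + (dσh x - f x) • β x) 2 μ ≤ Bγ * E + Bβ * D := by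
    have hcongr : eLpNorm (fun x => γ x • σh x + (dσh x - f x) • β x) 2 μ
        = eLpNorm (fun x => γ x • (σh x - σ x) + (dσh x - dσ x) • β x) 2 μ := by
      apply eLpNorm_congr_ae
      filter_upwards [hsys] with x hx
      have h : γ x • σh x + (dσh x - f x) • β x
          = γ x • (σh x - σ x) + (dσh x - dσ x) • β x + (γ x • σ x + (dσ x - f x) • β x) := by
        module
      rw [h, hx, add_zero]
    rw [hcongr]
    have hm1 : AEStronglyMeasurable (fun x => γ x • (σh x - σ x)) μ :=
      (hγm.aestronglyMeasurable).smul (hσh.sub hσ)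
    have hm2 : AEStronglyMeasurable (fun x => (dσh x - dσ x) • β x) μ :=
      ((hdσh.sub hdσ)).smul hβm.aestronglyMeasurable
    calc _ ≤ eLpNorm (fun x => γ x • (σh x - σ x)) 2 μ
          + eLpNorm (fun x => (dσh x - dσ x) • β x) 2 μ := eLpNorm_add_le hm1 hm2 one_le_two
      _ ≤ Bγ * E + Bβ * D := by
        refine add_le_add ?_ ?_
        · refine key_bound hBγ.ne hBγ' ?_
          refine Filter.Eventually.of_forall fun x => ?_
          rw [norm_smul, Real.norm_eq_abs, norm_sub_rev]
        · refine key_bound hBβ.ne hBβ' ?_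
          refine Filter.Eventually.of_forall fun x => ?_
          rw [norm_smul, Real.norm_eq_abs, Real.norm_eq_abs, abs_sub_comm, mul_comm]
  constructor
  · -- first inequality
    have hA1' : eLpNorm (fun x => dσh x + (γ x / ‖β x‖ ^ 2) * ⟪β x, σh x⟫ - f x) 2 μ
        ≤ 2 * M * N := by
      calc _ ≤ D + Bγβ * E := hA1
        _ ≤ M * N + M * N := by
            refine add_le_add ?_ (mul_le_mul' hBγβM hEN)
            calc D ≤ N := hDN
              _ = 1 * N := (one_mul N).symm
              _ ≤ M * N := mul_le_mul_left h1M N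
        _ = 2 * M * N := by ring
    have hstep : eLpNorm (fun x => dσh x + (γ x / ‖β x‖ ^ 2) * ⟪β x, σh x⟫ - f x) 2 μ ^ 2
        + ∑ i, eLpNorm (fun x => ⟪σh x, βp i x⟫) 2 μ ^ 2 ≤ (3 * M) ^ 2 * R := by
      have h1 : eLpNorm (fun x => dσh x + (γ x / ‖β x‖ ^ 2) * ⟪β x, σh x⟫ - f x) 2 μ ^ 2
          ≤ 4 * M ^ 2 * R := by
        calc _ ≤ (2 * M * N) ^ 2 := by exact pow_le_pow_left' hA1' 2
          _ = 4 * M ^ 2 * N ^ 2 := by ring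
          _ = 4 * M ^ 2 * R := by rw [hN2]
      have h2 : ∑ i, eLpNorm (fun x => ⟪σh x, βp i x⟫) 2 μ ^ 2 ≤ M ^ 2 * R := by
        calc ∑ i, eLpNorm (fun x => ⟪σh x, βp i x⟫) 2 μ ^ 2
            ≤ ∑ _i : Fin (d-1), E ^ 2 :=
              Finset.sum_le_sum fun i _ => pow_le_pow_left' (hSi i) 2
          _ = ((d - 1 : ℕ) : ℝ≥0∞) * E ^ 2 := by
              rw [Finset.sum_const, Finset.card_univ, Fintype.card_fin, nsmul_eq_mul]
          _ ≤ M ^ 2 * R := by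
              refine mul_le_mul' ?_ le_self_add
              calc ((d - 1 : ℕ) : ℝ≥0∞) ≤ (d : ℝ≥0∞) := by
                    exact_mod_cast Nat.cast_le.mpr (Nat.sub_le d 1)
                _ ≤ M := hdM
                _ = 1 * M := (one_mul M).symm
                _ ≤ M * M := mul_le_mul_left h1M M
                _ = M ^ 2 := (sq M).symm
      calc _ ≤ 4 * M ^ 2 * R + M ^ 2 * R := add_le_add h1 h2
        _ = 5 * (M ^ 2 * R) := by ring
        _ ≤ 9 * (M ^ 2 * R) := mul_le_mul_left (by norm_num) _
        _ = (3 * M) ^ 2 * R := by ring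
    calc _ ≤ ((3 * M) ^ 2 * R) ^ (1/2 : ℝ) := ENNReal.rpow_le_rpow hstep (by norm_num)
      _ = (3 * M) * R ^ (1/2 : ℝ) := by
          rw [ENNReal.mul_rpow_of_nonneg _ _ (by norm_num : (0:ℝ) ≤ 1/2), hsq]
  · -- second inequality
    calc _ ≤ Bγ * E + Bβ * D := hA3
      _ ≤ M * N + M * N := add_le_add (mul_le_mul' hBγM hEN) (mul_le_mul' hBβM hDN)
      _ = 2 * M * N := by ring
      _ ≤ 3 * M * N := by
          exact mul_le_mul_left (mul_le_mul_left (by norm_num) M) N
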